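/- arXiv:1908.06736 — 2 statements merged into one kernel-verified Lean document; each statement's English description precedes it below -/
import Mathlib

section
/- Let f be a homogeneous polynomial of degree t ≥ 1 in n variables and let ξ_t = e/θ where θ > 0 satisfies θᵗ = (n+1)(n+2)⋯(n+t) and e = (1,…,1). Then ∫_Δ f(x) dx = f̂(ξ_t)/n!, where Δ is the canonical simplex and f̂ is the Bombieri polynomial of f. -/
open MeasureTheory Finset

lemma fact_prod_nat (a b : ℕ) :
    a.factorial * ∏ j ∈ Finset.range b, (a + 1 + j) = (a + b).factorial := by
  induction b with
  | zero => simp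
  | succ b ih =>
    rw [Finset.prod_range_succ, ← mul_assoc, ih]
    rw [← Nat.add_assoc]
    rw [Nat.factorial_succ (a + b)]
    ring

lemma beta_nat (a b : ℕ) {c : ℝ} (hc : 0 ≤ c) :
    ∫ x in (0:ℝ)..c, x ^ a * (c - x) ^ b
      = (a.factorial * b.factorial : ℝ) / ((a + b + 1).factorial) * c ^ (a + b + 1) := by
  rcases eq_or_lt_of_le hc with h | h
  · rw [← h]; simp
  · have h1 := Complex.betaIntegral_scaled ((a : ℂ) + 1) ((b : ℂ) + 1) h
    have h2 := Complex.betaIntegral_eval_nat_add_one_right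
      (u := (a : ℂ) + 1) (by simp [Complex.add_re]; positivity) b
    have hprod : ∏ j ∈ Finset.range (b + 1), ((a : ℂ) + 1 + (j : ℕ))
        = ((a + b + 1).factorial : ℂ) / ((a.factorial : ℂ)) := by
      have := fact_prod_nat a (b + 1)
      have h3 : (↑(a.factorial * ∏ j ∈ Finset.range (b+1), (a + 1 + j)) : ℂ)
          = ((a + b + 1).factorial : ℂ) := by
        rw [this]; norm_cast
      push_cast at h3
      rw [eq_div_iff (by exact_mod_cast a.factorial_ne_zero)]
      rw [← h3]; ring
    have ea : ((a : ℂ) + 1 - 1) = ((a : ℕ) : ℂ) := by push_cast; ring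
    have eb : ((b : ℂ) + 1 - 1) = ((b : ℕ) : ℂ) := by push_cast; ring
    have ec : ((a : ℂ) + 1 + ((b : ℂ) + 1) - 1) = (((a + b + 1 : ℕ)) : ℂ) := by push_cast; ring
    rw [ea, eb, ec] at h1
    simp_rw [Complex.cpow_natCast] at h1
    have hL : ((∫ x in (0:ℝ)..c, x ^ a * (c - x) ^ b : ℝ) : ℂ)
        = ∫ x in (0:ℝ)..c, ((x:ℂ)) ^ a * (((c:ℂ)) - x) ^ b := by
      rw [← intervalIntegral.integral_ofReal]
      apply intervalIntegral.integral_congr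
      intro x hx
      push_cast
      ring
    rw [h2, hprod] at h1
    apply Complex.ofReal_injective
    rw [hL, h1]
    have hfa : ((a.factorial : ℂ)) ≠ 0 := by exact_mod_cast a.factorial_ne_zero
    have hfab : (((a+b+1).factorial : ℂ)) ≠ 0 := by exact_mod_cast (a+b+1).factorial_ne_zero
    push_cast
    field_simp

lemma simplex_isCompact (n : ℕ) (c : ℝ) :
    IsCompact {x : Fin n → ℝ | (∀ i, 0 ≤ x i) ∧ ∑ i, x i ≤ c} := by
  have hclosed : IsClosed {x : Fin n → ℝ | (∀ i, 0 ≤ x i) ∧ ∑ i, x i ≤ c} := by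
    have : {x : Fin n → ℝ | (∀ i, 0 ≤ x i) ∧ ∑ i, x i ≤ c}
        = (⋂ i, {x : Fin n → ℝ | 0 ≤ x i}) ∩ {x : Fin n → ℝ | ∑ i, x i ≤ c} := by
      ext x; simp [Set.mem_iInter]
    rw [this]
    exact (isClosed_iInter fun i =>
        isClosed_le continuous_const (continuous_apply i)).inter
      (isClosed_le (by continuity) continuous_const)
  refine IsCompact.of_isClosed_subset (isCompact_Icc (a := (0 : Fin n → ℝ))
    (b := fun _ => c)) hclosed ?_
  intro x hx
  constructor
  · intro i; exact hx.1 i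
  · intro i
    calc x i ≤ ∑ j, x j := Finset.single_le_sum (fun j _ => hx.1 j) (Finset.mem_univ i)
    _ ≤ c := hx.2

lemma simplex_measurable (n : ℕ) (c : ℝ) :
    MeasurableSet {x : Fin n → ℝ | (∀ i, 0 ≤ x i) ∧ ∑ i, x i ≤ c} :=
  (simplex_isCompact n c).isClosed.measurableSet

lemma simplex_integrableOn (n : ℕ) (c : ℝ) (f : (Fin n → ℝ) → ℝ) (hf : Continuous f) :
    IntegrableOn f {x : Fin n → ℝ | (∀ i, 0 ≤ x i) ∧ ∑ i, x i ≤ c} :=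
  hf.continuousOn.integrableOn_compact (simplex_isCompact n c)

lemma simplex_moment : ∀ (n : ℕ) (α : Fin n → ℕ) (c : ℝ), 0 ≤ c →
    ∫ x : Fin n → ℝ, Set.indicator {x : Fin n → ℝ | (∀ i, 0 ≤ x i) ∧ ∑ i, x i ≤ c}
      (fun x => ∏ i, x i ^ α i) x
    = (∏ i, ((α i).factorial : ℝ)) * c ^ (n + ∑ i, α i) / ((n + ∑ i, α i).factorial : ℝ) := by
  intro n
  induction n with
  | zero =>
    intro α c hc
    have hset : {x : Fin 0 → ℝ | (∀ i, 0 ≤ x i) ∧ ∑ i, x i ≤ c} = Set.univ := by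
      ext x; simp [hc]
    rw [hset]
    simp only [Set.indicator_univ, Finset.univ_eq_empty, Finset.prod_empty, Finset.sum_empty]
    rw [integral_const]
    simp [volume_pi, Measure.real, Measure.pi_univ]
  | succ n ih =>
    intro α c hc
    set S : Set (Fin (n+1) → ℝ) := {x | (∀ i, 0 ≤ x i) ∧ ∑ i, x i ≤ c} with hSdef
    have mp := (measurePreserving_piFinSuccAbove (fun _ : Fin (n+1) => (volume : Measure ℝ)) 0).symm
    have hint : Integrable (S.indicator fun x => ∏ i, x i ^ α i) := by
      rw [integrable_indicator_iff (simplex_measurable _ c)]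
      exact simplex_integrableOn _ c _ (by continuity)
    rw [volume_pi] at hint ⊢
    rw [← mp.integral_comp']
    have hint2 : Integrable ((S.indicator fun x => ∏ i, x i ^ α i) ∘
        (MeasurableEquiv.piFinSuccAbove (fun _ : Fin (n+1) => ℝ) 0).symm)
        ((volume : Measure ℝ).prod (Measure.pi fun _ => (volume : Measure ℝ))) := by
      rw [mp.integrable_comp_emb (MeasurableEquiv.measurableEmbedding _)]
      exact hint
    rw [show (fun x => (S.indicator fun x => ∏ i, x i ^ α i)
        ((MeasurableEquiv.piFinSuccAbove (fun _ : Fin (n+1) => ℝ) 0).symm x))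
      = ((S.indicator fun x => ∏ i, x i ^ α i) ∘
        (MeasurableEquiv.piFinSuccAbove (fun _ : Fin (n+1) => ℝ) 0).symm) from rfl]
    rw [MeasureTheory.integral_prod _ hint2]
    set s' : ℕ := ∑ i : Fin n, α (Fin.succ i) with hs'
    set M : ℕ := n + s' with hM
    set D : ℝ := (∏ i : Fin n, ((α (Fin.succ i)).factorial : ℝ)) / (M.factorial : ℝ) with hD
    have hcons : ∀ (a : ℝ) (y : Fin n → ℝ),
        ((S.indicator fun x => ∏ i, x i ^ α i) ∘
          (MeasurableEquiv.piFinSuccAbove (fun _ : Fin (n+1) => ℝ) 0).symm) (a, y)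
        = if (0 ≤ a ∧ ∀ i, 0 ≤ y i) ∧ a + ∑ i, y i ≤ c
          then a ^ α 0 * ∏ i, y i ^ α (Fin.succ i) else 0 := by
      intro a y
      simp only [Function.comp_apply, MeasurableEquiv.piFinSuccAbove_symm_apply,
        Fin.insertNthEquiv, Equiv.coe_fn_mk, Fin.insertNth_zero, Set.indicator_apply,
        hSdef, Set.mem_setOf_eq, Fin.forall_fin_succ, Fin.sum_univ_succ, Fin.prod_univ_succ,
        Fin.cons_zero, Fin.cons_succ, Fin.zero_succAbove, cast_eq]
    have key : ∀ a : ℝ,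
        (∫ y : Fin n → ℝ, ((S.indicator fun x => ∏ i, x i ^ α i) ∘
          (MeasurableEquiv.piFinSuccAbove (fun _ : Fin (n+1) => ℝ) 0).symm) (a, y)
            ∂(Measure.pi fun _ => (volume : Measure ℝ)))
        = if 0 ≤ a ∧ a ≤ c then D * (a ^ α 0 * (c - a) ^ M) else 0 := by
      intro a
      simp_rw [hcons a]
      by_cases ha : 0 ≤ a
      · have heq : (fun y : Fin n → ℝ => if (0 ≤ a ∧ ∀ i, 0 ≤ y i) ∧ a + ∑ i, y i ≤ c
            then a ^ α 0 * ∏ i, y i ^ α (Fin.succ i) else 0)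
            = fun y => a ^ α 0 *
              Set.indicator {y : Fin n → ℝ | (∀ i, 0 ≤ y i) ∧ ∑ i, y i ≤ c - a}
                (fun y => ∏ i, y i ^ α (Fin.succ i)) y := by
          funext y
          rw [Set.indicator_apply, mul_ite, mul_zero]
          refine if_congr ?_ rfl rfl
          constructor
          · rintro ⟨⟨-, h1⟩, h2⟩; exact ⟨h1, by linarith⟩
          · rintro ⟨h1, h2⟩
            exact ⟨⟨ha, h1⟩, by linarith⟩
        rw [heq, MeasureTheory.integral_const_mul]
        by_cases hac : a ≤ c
        · rw [if_pos ⟨ha, hac⟩]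
          have hvol : (Measure.pi fun _ : Fin n => (volume : Measure ℝ))
              = (volume : Measure (Fin n → ℝ)) := (volume_pi).symm
          rw [hvol, ih (fun i => α (Fin.succ i)) (c - a) (by linarith)]
          rw [hD]
          ring
        · rw [if_neg (by tauto)]
          have hzero : ∀ y : Fin n → ℝ,
              Set.indicator {y : Fin n → ℝ | (∀ i, 0 ≤ y i) ∧ ∑ i, y i ≤ c - a}
                (fun y => ∏ i, y i ^ α (Fin.succ i)) y = 0 := by
            intro y
            apply Set.indicator_of_notMem
            rintro ⟨h1, h2⟩
            have : (0:ℝ) ≤ ∑ i, y i := Finset.sum_nonneg fun i _ => h1 i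
            exact hac (by linarith)
          simp_rw [hzero]
          simp
      · rw [if_neg (by tauto)]
        have : ∀ y : Fin n → ℝ, (if (0 ≤ a ∧ ∀ i, 0 ≤ y i) ∧ a + ∑ i, y i ≤ c
            then a ^ α 0 * ∏ i, y i ^ α (Fin.succ i) else 0) = 0 := by
          intro y; rw [if_neg (by tauto)]
        simp_rw [this]
        simp
    rw [MeasureTheory.integral_congr_ae (Filter.Eventually.of_forall key)]
    have hind : (fun a : ℝ => if 0 ≤ a ∧ a ≤ c then D * (a ^ α 0 * (c - a) ^ M) else 0)
        = Set.indicator (Set.Icc (0:ℝ) c) (fun a => D * (a ^ α 0 * (c - a) ^ M)) := by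
      funext a
      simp only [Set.indicator_apply, Set.mem_Icc]
    rw [hind, MeasureTheory.integral_indicator measurableSet_Icc,
      MeasureTheory.integral_Icc_eq_integral_Ioc,
      ← intervalIntegral.integral_of_le hc,
      intervalIntegral.integral_const_mul, beta_nat (α 0) M hc]
    rw [Fin.prod_univ_succ, Fin.sum_univ_succ]
    have he : n + 1 + (α 0 + s') = α 0 + M + 1 := by omega
    rw [he]
    rw [hD]
    have h1 : ((M.factorial : ℝ)) ≠ 0 := by exact_mod_cast M.factorial_ne_zero
    have h2 : (((α 0 + M + 1).factorial : ℝ)) ≠ 0 := by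
      exact_mod_cast (α 0 + M + 1).factorial_ne_zero
    field_simp

/-- The Bombieri polynomial of `p`, evaluated at `x`. -/
noncomputable def bombieriEval {n : ℕ} (p : MvPolynomial (Fin n) ℝ) (x : Fin n → ℝ) : ℝ :=
  ∑ α ∈ p.support, (∏ i, (Nat.factorial (α i) : ℝ)) * p.coeff α * ∏ i, x i ^ α i

theorem integral_homog_poly_eq_bombieri_at_xi (n t : ℕ) (ht : 1 ≤ t)
    (p : MvPolynomial (Fin n) ℝ) (hp : p.IsHomogeneous t) (θ : ℝ) (hθ : 0 < θ)
    (hθt : θ ^ t = ∏ j ∈ Finset.range t, (n + 1 + j : ℝ)) :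
    ∫ x in {x : Fin n → ℝ | (∀ i, 0 ≤ x i) ∧ ∑ i, x i ≤ 1}, MvPolynomial.eval x p =
      bombieriEval p (fun _ => θ⁻¹) / (Nat.factorial n : ℝ) := by
  have hθt' : θ ^ t = ((n + t).factorial : ℝ) / (n.factorial : ℝ) := by
    rw [hθt, eq_div_iff (by exact_mod_cast n.factorial_ne_zero : (n.factorial : ℝ) ≠ 0)]
    have := congrArg (Nat.cast : ℕ → ℝ) (fact_prod_nat n t)
    push_cast at this
    rw [← this]; ring
  have hdeg : ∀ d ∈ p.support, ∑ i, d i = t := by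
    intro d hd
    have h := hp (MvPolynomial.mem_support_iff.mp hd)
    have h2 : ∑ i : Fin n, d i = (Finsupp.weight 1) d := by
      rw [Finsupp.weight_apply, Finsupp.sum_fintype _ _ (fun i => by simp)]
      simp [smul_eq_mul]
    rw [h2, h]
  have heval : ∀ x : Fin n → ℝ,
      MvPolynomial.eval x p = ∑ d ∈ p.support, p.coeff d * ∏ i, x i ^ d i := by
    intro x
    rw [MvPolynomial.eval_eq]
    refine Finset.sum_congr rfl fun d _ => ?_
    have hps : ∏ i ∈ d.support, x i ^ d i = ∏ i : Fin n, x i ^ d i :=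
      Finset.prod_subset (Finset.subset_univ _) (fun i _ hi => by
        rw [Finsupp.notMem_support_iff.mp hi, pow_zero])
    rw [hps]
  simp_rw [heval]
  rw [MeasureTheory.integral_finset_sum _ (fun d _ => by
    refine Integrable.const_mul ?_ _
    exact simplex_integrableOn n 1 _ (by continuity))]
  rw [bombieriEval, Finset.sum_div]
  refine Finset.sum_congr rfl fun d hd => ?_
  rw [MeasureTheory.integral_const_mul,
    ← MeasureTheory.integral_indicator (simplex_measurable n 1),
    simplex_moment n (fun i => d i) 1 zero_le_one, hdeg d hd, one_pow]
  have h1 : ((n + t).factorial : ℝ) ≠ 0 := by exact_mod_cast (n + t).factorial_ne_zero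
  have h2 : ((n.factorial : ℝ)) ≠ 0 := by exact_mod_cast n.factorial_ne_zero
  have h3 : ∏ i, (θ⁻¹) ^ d i = (θ ^ t)⁻¹ := by
    rw [Finset.prod_pow_eq_pow_sum, hdeg d hd, inv_pow]
  rw [h3, hθt']
  field_simp
end

section
/- For α ∈ ℝⁿ with each αᵢ > -1 and t := α₁+⋯+αₙ, the integral over the canonical simplex Δ ⊂ ℝⁿ of x^α equals Γ(1+α₁)⋯Γ(1+αₙ)/Γ(1+n+t). In the special case α ∈ ℕⁿ this gives ∫_Δ x^α dx = α₁!⋯αₙ!/(n+|α|)!. -/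
open MeasureTheory Finset Set ENNReal

-- hyperplane null
lemma null_level {n : ℕ} (L : (Fin n → ℝ) →ₗ[ℝ] ℝ) (hL : L ≠ 0) (c : ℝ) :
    volume {x | L x = c} = 0 := by
  obtain ⟨v, hv⟩ : ∃ v, L v ≠ 0 := by
    by_contra h; push_neg at h; exact hL (LinearMap.ext fun x => by simp [h])
  set x₀ := (c / L v) • v with hx₀def
  have hx₀ : L x₀ = c := by
    simp [hx₀def, LinearMap.map_smul, div_mul_cancel₀ _ hv]
  have hset : {x | L x = c} = (fun y => -x₀ + y) ⁻¹' (LinearMap.ker L : Set (Fin n → ℝ)) := by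
    ext x
    simp only [Set.mem_setOf_eq, Set.mem_preimage, SetLike.mem_coe, LinearMap.mem_ker, map_add, map_neg,
      hx₀]
    constructor
    · intro h; linarith
    · intro h; linarith
  rw [hset, measure_preimage_add]
  exact Measure.addHaar_submodule volume _ (by rwa [Ne, LinearMap.ker_eq_top])

lemma lint_exp (s : ℝ) :
    ∫⁻ r in Set.Ioi s, ENNReal.ofReal (Real.exp (-r)) = ENNReal.ofReal (Real.exp (-s)) := by
  rw [← integral_exp_neg_Ioi s]
  rw [MeasureTheory.ofReal_integral_eq_lintegral_ofReal]
  · have := exp_neg_integrableOn_Ioi s (b := 1) one_pos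
    simpa [IntegrableOn] using this
  · exact ae_of_all _ fun r => (Real.exp_pos _).le

lemma lint_gamma {s : ℝ} (hs : 0 < s) :
    ∫⁻ r in Set.Ioi (0:ℝ), ENNReal.ofReal (Real.exp (-r) * r ^ (s - 1)) =
      ENNReal.ofReal (Real.Gamma s) := by
  rw [Real.Gamma_eq_integral hs]
  rw [MeasureTheory.ofReal_integral_eq_lintegral_ofReal (Real.GammaIntegral_convergent hs)]
  refine (ae_restrict_iff' measurableSet_Ioi).2 (ae_of_all _ fun r hr => ?_)
  have : (0:ℝ) < r := hr
  positivity

lemma meas_prod_rpow {n : ℕ} (α : Fin n → ℝ) :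
    Measurable fun x : Fin n → ℝ => ∏ i, x i ^ α i :=
  Finset.measurable_prod _ fun i _ => by fun_prop

lemma meas_Aset {n : ℕ} (r : ℝ) :
    MeasurableSet {x : Fin n → ℝ | (∀ i, 0 < x i) ∧ ∑ i, x i < r} := by
  have h1 : {x : Fin n → ℝ | (∀ i, 0 < x i) ∧ ∑ i, x i < r} =
      (⋂ i, {x : Fin n → ℝ | 0 < x i}) ∩ {x : Fin n → ℝ | ∑ i, x i < r} := by
    ext x; simp [Set.mem_iInter]
  rw [h1]
  exact (MeasurableSet.iInter fun i =>
      measurableSet_lt measurable_const (measurable_pi_apply i)).inter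
    (measurableSet_lt (Finset.measurable_sum _ fun i _ => measurable_pi_apply i)
      measurable_const)

lemma scaling {n : ℕ} (α : Fin n → ℝ) {r : ℝ} (hr : 0 < r) :
    (∫⁻ x in {x : Fin n → ℝ | (∀ i, 0 < x i) ∧ ∑ i, x i < r},
        ENNReal.ofReal (∏ i, x i ^ α i)) =
    ENNReal.ofReal (r ^ ((n:ℝ) + ∑ i, α i)) *
      ∫⁻ x in {x : Fin n → ℝ | (∀ i, 0 < x i) ∧ ∑ i, x i < 1},
        ENNReal.ofReal (∏ i, x i ^ α i) := by
  set t := ∑ i, α i with ht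
  set g : (Fin n → ℝ) → ℝ≥0∞ :=
    Set.indicator {x : Fin n → ℝ | (∀ i, 0 < x i) ∧ ∑ i, x i < r}
      (fun x => ENNReal.ofReal (∏ i, x i ^ α i)) with hgdef
  have hg : Measurable g := ((meas_prod_rpow α).ennreal_ofReal).indicator (meas_Aset r)
  have hL : (∫⁻ x in {x : Fin n → ℝ | (∀ i, 0 < x i) ∧ ∑ i, x i < r},
      ENNReal.ofReal (∏ i, x i ^ α i)) = ∫⁻ x, g x := by
    rw [hgdef, lintegral_indicator (meas_Aset r)]
  have hmap := Measure.map_addHaar_smul (volume : Measure (Fin n → ℝ)) (ne_of_gt hr)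
  have h2 : ∫⁻ x, g x ∂(Measure.map (r • ·) volume) = ∫⁻ y, g (r • y) :=
    lintegral_map hg (measurable_const_smul r)
  rw [hmap, lintegral_smul_measure] at h2
  have hfr : Module.finrank ℝ (Fin n → ℝ) = n := by
    simp [Module.finrank_pi]
  rw [hfr] at h2
  -- compute g (r • y)
  have hgr : ∀ y : Fin n → ℝ, g (r • y) =
      Set.indicator {x : Fin n → ℝ | (∀ i, 0 < x i) ∧ ∑ i, x i < 1}
        (fun y => ENNReal.ofReal (r ^ t * ∏ i, y i ^ α i)) y := by
    intro y
    by_cases hy : y ∈ {x : Fin n → ℝ | (∀ i, 0 < x i) ∧ ∑ i, x i < 1}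
    · have hmem : r • y ∈ {x : Fin n → ℝ | (∀ i, 0 < x i) ∧ ∑ i, x i < r} := by
        refine ⟨fun i => ?_, ?_⟩
        · simpa [smul_eq_mul] using mul_pos hr (hy.1 i)
        · have : ∑ i, r * y i = r * ∑ i, y i := (Finset.mul_sum _ _ _).symm
          simp only [Pi.smul_apply, smul_eq_mul]
          rw [this]
          calc r * ∑ i, y i < r * 1 := by
                exact mul_lt_mul_of_pos_left hy.2 hr
            _ = r := mul_one r
      rw [hgdef]
      rw [Set.indicator_of_mem hmem, Set.indicator_of_mem hy]
      congr 1
      have : ∀ i, (r • y) i ^ α i = r ^ α i * y i ^ α i := fun i => by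
        simp only [Pi.smul_apply, smul_eq_mul]
        exact Real.mul_rpow hr.le (hy.1 i).le
      rw [Finset.prod_congr rfl fun i _ => this i, Finset.prod_mul_distrib,
        ← Real.rpow_sum_of_pos hr, ← ht]
    · have hmem : r • y ∉ {x : Fin n → ℝ | (∀ i, 0 < x i) ∧ ∑ i, x i < r} := by
        intro hmem
        refine hy ⟨fun i => ?_, ?_⟩
        · have h1 := hmem.1 i
          simp only [Pi.smul_apply, smul_eq_mul] at h1
          nlinarith [h1]
        · have h2' := hmem.2
          simp only [Pi.smul_apply, smul_eq_mul, ← Finset.mul_sum] at h2'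
          nlinarith [h2']
      rw [hgdef, Set.indicator_of_notMem hmem, Set.indicator_of_notMem hy]
  have h3 : ∫⁻ y, g (r • y) = ENNReal.ofReal (r ^ t) *
      ∫⁻ x in {x : Fin n → ℝ | (∀ i, 0 < x i) ∧ ∑ i, x i < 1},
        ENNReal.ofReal (∏ i, x i ^ α i) := by
    simp_rw [hgr]
    rw [lintegral_indicator (meas_Aset 1)]
    rw [← lintegral_const_mul' _ _ ENNReal.ofReal_ne_top]
    congr 1
    ext x
    rw [← ENNReal.ofReal_mul (Real.rpow_nonneg hr.le _)]
  have hc : ENNReal.ofReal (r ^ (n:ℕ)) * ENNReal.ofReal |(r ^ (n:ℕ))⁻¹| = 1 := by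
    rw [← ENNReal.ofReal_mul (by positivity), abs_of_nonneg (by positivity),
      mul_inv_cancel₀ (by positivity), ENNReal.ofReal_one]
  calc (∫⁻ x in {x : Fin n → ℝ | (∀ i, 0 < x i) ∧ ∑ i, x i < r},
        ENNReal.ofReal (∏ i, x i ^ α i))
      = 1 * ∫⁻ x, g x := by rw [hL, one_mul]
    _ = ENNReal.ofReal (r ^ (n:ℕ)) *
        (ENNReal.ofReal |(r ^ (n:ℕ))⁻¹| * ∫⁻ x, g x) := by rw [← mul_assoc, hc]
    _ = ENNReal.ofReal (r ^ (n:ℕ)) * ∫⁻ y, g (r • y) := by rw [← h2, smul_eq_mul]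
    _ = ENNReal.ofReal (r ^ ((n:ℝ) + t)) *
        ∫⁻ x in {x : Fin n → ℝ | (∀ i, 0 < x i) ∧ ∑ i, x i < 1},
          ENNReal.ofReal (∏ i, x i ^ α i) := by
        rw [h3, ← mul_assoc, ← ENNReal.ofReal_mul (by positivity)]
        congr 2
        rw [Real.rpow_add hr, Real.rpow_natCast]

lemma f_integrable {a : ℝ} (ha : -1 < a) :
    Integrable (Set.indicator (Set.Ioi 0) (fun u : ℝ => u ^ a * Real.exp (-u))) := by
  rw [integrable_indicator_iff measurableSet_Ioi]
  have := Real.GammaIntegral_convergent (s := 1 + a) (by linarith)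
  refine this.congr_fun (fun u hu => ?_) measurableSet_Ioi
  rw [add_sub_cancel_left, mul_comm]

lemma f_integral {a : ℝ} (ha : -1 < a) :
    ∫ u : ℝ, Set.indicator (Set.Ioi 0) (fun u : ℝ => u ^ a * Real.exp (-u)) u =
      Real.Gamma (1 + a) := by
  rw [integral_indicator measurableSet_Ioi, Real.Gamma_eq_integral (by linarith : (0:ℝ) < 1 + a)]
  rw [add_sub_cancel_left]
  congr 1
  ext u
  rw [mul_comm]

lemma Jprod {n : ℕ} (α : Fin n → ℝ) (hα : ∀ i, -1 < α i) :
    ∫⁻ x : Fin n → ℝ, ENNReal.ofReal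
        (∏ i, Set.indicator (Set.Ioi 0) (fun u : ℝ => u ^ α i * Real.exp (-u)) (x i)) =
      ENNReal.ofReal (∏ i, Real.Gamma (1 + α i)) := by
  have hfi : ∀ i, Integrable (Set.indicator (Set.Ioi 0)
      (fun u : ℝ => u ^ α i * Real.exp (-u))) := fun i => f_integrable (hα i)
  have hnonneg : ∀ (i : Fin n) (u : ℝ),
      0 ≤ Set.indicator (Set.Ioi 0) (fun u : ℝ => u ^ α i * Real.exp (-u)) u := by
    intro i u
    apply Set.indicator_nonneg
    intro v hv
    have : (0:ℝ) < v := hv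
    positivity
  rw [volume_pi]
  rw [← MeasureTheory.ofReal_integral_eq_lintegral_ofReal
    (MeasureTheory.Integrable.fintype_prod (𝕜 := ℝ) hfi)
    (ae_of_all _ fun x => Finset.prod_nonneg fun i _ => hnonneg i (x i))]
  rw [MeasureTheory.integral_fintype_prod_eq_prod (𝕜 := ℝ)]
  congr 1
  exact Finset.prod_congr rfl fun i _ => f_integral (hα i)

lemma Jswap {n : ℕ} (α : Fin n → ℝ) :
    (∫⁻ x : Fin n → ℝ, ENNReal.ofReal
        (∏ i, Set.indicator (Set.Ioi 0) (fun u : ℝ => u ^ α i * Real.exp (-u)) (x i))) =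
    ∫⁻ r in Set.Ioi (0:ℝ), ENNReal.ofReal (Real.exp (-r)) *
      ∫⁻ x in {x : Fin n → ℝ | (∀ i, 0 < x i) ∧ ∑ i, x i < r},
        ENNReal.ofReal (∏ i, x i ^ α i) := by
  classical
  set Q : Set ((Fin n → ℝ) × ℝ) := {p | (∀ i, 0 < p.1 i) ∧ ∑ i, p.1 i < p.2} with hQdef
  have hQ : MeasurableSet Q := by
    have h1 : Q = (⋂ i, {p : (Fin n → ℝ) × ℝ | 0 < p.1 i}) ∩
        {p : (Fin n → ℝ) × ℝ | ∑ i, p.1 i < p.2} := by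
      ext p; simp [hQdef, Set.mem_iInter]
    rw [h1]
    have hs1 : ∀ i : Fin n, Measurable (fun p : (Fin n → ℝ) × ℝ => p.1 i) :=
      fun i => (measurable_pi_apply i).comp measurable_fst
    exact (MeasurableSet.iInter fun i =>
        measurableSet_lt (measurable_const (a := (0:ℝ))) (hs1 i)).inter
      (measurableSet_lt (Finset.measurable_sum _ fun i _ => hs1 i) measurable_snd)
  set G : (Fin n → ℝ) × ℝ → ℝ≥0∞ :=
    Set.indicator Q (fun p => ENNReal.ofReal ((∏ i, p.1 i ^ α i) * Real.exp (-p.2)))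
    with hGdef
  have hG : Measurable G := by
    apply Measurable.indicator _ hQ
    exact (((meas_prod_rpow α).comp measurable_fst).mul
      (Real.measurable_exp.comp measurable_snd.neg)).ennreal_ofReal
  have hLHS : ∀ x : Fin n → ℝ,
      (∫⁻ r, G (x, r)) = ENNReal.ofReal
        (∏ i, Set.indicator (Set.Ioi 0) (fun u : ℝ => u ^ α i * Real.exp (-u)) (x i)) := by
    intro x
    by_cases hx : ∀ i, 0 < x i
    · have h1 : ∀ r, G (x, r) = Set.indicator (Set.Ioi (∑ i, x i))
          (fun r => ENNReal.ofReal ((∏ i, x i ^ α i) * Real.exp (-r))) r := by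
        intro r
        by_cases hr : r ∈ Set.Ioi (∑ i, x i)
        · rw [Set.indicator_of_mem hr, hGdef,
            Set.indicator_of_mem (by exact ⟨hx, hr⟩ : (x, r) ∈ Q)]
        · rw [Set.indicator_of_notMem hr, hGdef, Set.indicator_of_notMem]
          intro hmem
          exact hr hmem.2
      rw [show (fun r => G (x, r)) = _ from funext h1,
        lintegral_indicator measurableSet_Ioi]
      have hprodnn : 0 ≤ ∏ i, x i ^ α i :=
        Finset.prod_nonneg fun i _ => Real.rpow_nonneg (hx i).le _
      calc ∫⁻ r in Set.Ioi (∑ i, x i),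
            ENNReal.ofReal ((∏ i, x i ^ α i) * Real.exp (-r))
          = ∫⁻ r in Set.Ioi (∑ i, x i),
            ENNReal.ofReal (∏ i, x i ^ α i) * ENNReal.ofReal (Real.exp (-r)) := by
            congr 1; ext r; rw [ENNReal.ofReal_mul hprodnn]
        _ = ENNReal.ofReal (∏ i, x i ^ α i) * ENNReal.ofReal (Real.exp (-(∑ i, x i))) := by
            rw [lintegral_const_mul' _ _ ENNReal.ofReal_ne_top, lint_exp]
        _ = ENNReal.ofReal ((∏ i, x i ^ α i) * Real.exp (-(∑ i, x i))) := by
            rw [ENNReal.ofReal_mul hprodnn]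
        _ = _ := by
            congr 1
            have : ∀ i, Set.indicator (Set.Ioi 0) (fun u : ℝ => u ^ α i * Real.exp (-u)) (x i)
                = x i ^ α i * Real.exp (-(x i)) := fun i =>
              Set.indicator_of_mem (hx i) _
            rw [Finset.prod_congr rfl fun i _ => this i, Finset.prod_mul_distrib]
            congr 1
            rw [← Real.exp_sum]
            congr 1
            rw [← Finset.sum_neg_distrib]
    · push_neg at hx
      obtain ⟨i, hi⟩ := hx
      have h0 : ∀ r, G (x, r) = 0 := by
        intro r
        rw [hGdef, Set.indicator_of_notMem]
        intro hmem
        exact absurd (hmem.1 i) (not_lt.2 hi)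
      rw [show (fun r => G (x, r)) = fun _ => (0:ℝ≥0∞) from funext h0, lintegral_const,
        zero_mul]
      have : Set.indicator (Set.Ioi 0) (fun u : ℝ => u ^ α i * Real.exp (-u)) (x i) = 0 :=
        Set.indicator_of_notMem (by simpa using hi) _
      rw [Finset.prod_eq_zero (Finset.mem_univ i) this, ENNReal.ofReal_zero]
  have hRHS : ∀ r : ℝ,
      (∫⁻ x, G (x, r)) = Set.indicator (Set.Ioi (0:ℝ))
        (fun r => ENNReal.ofReal (Real.exp (-r)) *
          ∫⁻ x in {x : Fin n → ℝ | (∀ i, 0 < x i) ∧ ∑ i, x i < r},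
            ENNReal.ofReal (∏ i, x i ^ α i)) r := by
    intro r
    have h1 : ∀ x : Fin n → ℝ, G (x, r) =
        Set.indicator {x : Fin n → ℝ | (∀ i, 0 < x i) ∧ ∑ i, x i < r}
          (fun x => ENNReal.ofReal (Real.exp (-r) * ∏ i, x i ^ α i)) x := by
      intro x
      by_cases hx : x ∈ {x : Fin n → ℝ | (∀ i, 0 < x i) ∧ ∑ i, x i < r}
      · rw [Set.indicator_of_mem hx, hGdef, Set.indicator_of_mem (by exact hx : (x, r) ∈ Q)]
        rw [mul_comm]
      · rw [Set.indicator_of_notMem hx, hGdef, Set.indicator_of_notMem (by exact hx)]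
    rw [show (fun x => G (x, r)) = _ from funext h1, lintegral_indicator (meas_Aset r)]
    have h2 : (∫⁻ x in {x : Fin n → ℝ | (∀ i, 0 < x i) ∧ ∑ i, x i < r},
        ENNReal.ofReal (Real.exp (-r) * ∏ i, x i ^ α i)) =
        ENNReal.ofReal (Real.exp (-r)) *
          ∫⁻ x in {x : Fin n → ℝ | (∀ i, 0 < x i) ∧ ∑ i, x i < r},
            ENNReal.ofReal (∏ i, x i ^ α i) := by
      rw [← lintegral_const_mul' _ _ ENNReal.ofReal_ne_top]
      congr 1; ext x; rw [ENNReal.ofReal_mul (Real.exp_pos _).le]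
    rw [h2]
    by_cases hr : r ∈ Set.Ioi (0:ℝ)
    · rw [Set.indicator_of_mem hr]
    · rw [Set.indicator_of_notMem hr]
      have hempty : {x : Fin n → ℝ | (∀ i, 0 < x i) ∧ ∑ i, x i < r} = ∅ := by
        ext x
        simp only [Set.mem_setOf_eq, Set.mem_empty_iff_false, iff_false, not_and, not_lt]
        intro hx
        have h0 : (0:ℝ) ≤ ∑ i, x i := Finset.sum_nonneg fun i _ => (hx i).le
        have : ¬ (0:ℝ) < r := hr
        linarith [not_lt.1 this]
      rw [hempty]
      simp
  calc (∫⁻ x : Fin n → ℝ, ENNReal.ofReal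
        (∏ i, Set.indicator (Set.Ioi 0) (fun u : ℝ => u ^ α i * Real.exp (-u)) (x i)))
      = ∫⁻ x : Fin n → ℝ, ∫⁻ r : ℝ, G (x, r) := by
        congr 1; ext x; rw [hLHS x]
    _ = ∫⁻ r : ℝ, ∫⁻ x : Fin n → ℝ, G (x, r) := by
        exact lintegral_lintegral_swap hG.aemeasurable
    _ = ∫⁻ r : ℝ, Set.indicator (Set.Ioi (0:ℝ))
        (fun r => ENNReal.ofReal (Real.exp (-r)) *
          ∫⁻ x in {x : Fin n → ℝ | (∀ i, 0 < x i) ∧ ∑ i, x i < r},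
            ENNReal.ofReal (∏ i, x i ^ α i)) r := by
        congr 1; ext r; rw [hRHS r]
    _ = _ := lintegral_indicator measurableSet_Ioi _

lemma key {n : ℕ} (α : Fin n → ℝ) (hα : ∀ i, -1 < α i) :
    (∫⁻ x in {x : Fin n → ℝ | (∀ i, 0 < x i) ∧ ∑ i, x i < 1},
        ENNReal.ofReal (∏ i, x i ^ α i)) =
      ENNReal.ofReal ((∏ i, Real.Gamma (1 + α i)) / Real.Gamma (1 + n + ∑ i, α i)) := by
  set t := ∑ i, α i with ht
  set L1 := ∫⁻ x in {x : Fin n → ℝ | (∀ i, 0 < x i) ∧ ∑ i, x i < 1},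
      ENNReal.ofReal (∏ i, x i ^ α i) with hL1
  have htn : -(n:ℝ) ≤ t := by
    have : ∑ _i : Fin n, (-1:ℝ) ≤ t := Finset.sum_le_sum fun i _ => (hα i).le
    simpa using this
  have hs : 0 < 1 + (n:ℝ) + t := by linarith
  have hGpos : 0 < Real.Gamma (1 + (n:ℝ) + t) := Real.Gamma_pos_of_pos hs
  have main : ENNReal.ofReal (Real.Gamma (1 + (n:ℝ) + t)) * L1 =
      ENNReal.ofReal (∏ i, Real.Gamma (1 + α i)) := by
    rw [← Jprod α hα, Jswap α]
    have hcongr : ∫⁻ r in Set.Ioi (0:ℝ), ENNReal.ofReal (Real.exp (-r)) *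
        ∫⁻ x in {x : Fin n → ℝ | (∀ i, 0 < x i) ∧ ∑ i, x i < r},
          ENNReal.ofReal (∏ i, x i ^ α i) =
        ∫⁻ r in Set.Ioi (0:ℝ),
          ENNReal.ofReal (Real.exp (-r) * r ^ ((n:ℝ) + t)) * L1 := by
      refine setLIntegral_congr_fun measurableSet_Ioi (fun r hr => ?_)
      have hr' : (0:ℝ) < r := hr
      rw [scaling α hr', ← mul_assoc, ← ENNReal.ofReal_mul (Real.exp_pos _).le, ← hL1, ← ht]
    rw [hcongr]
    rw [lintegral_mul_const _ (by fun_prop : Measurable fun r : ℝ =>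
      ENNReal.ofReal (Real.exp (-r) * r ^ ((n:ℝ) + t)))]
    have : ((n:ℝ) + t) = (1 + (n:ℝ) + t) - 1 := by ring
    rw [this, lint_gamma hs]
  have hne0 : ENNReal.ofReal (Real.Gamma (1 + (n:ℝ) + t)) ≠ 0 := by
    simp [ENNReal.ofReal_eq_zero, not_le, hGpos]
  have hnetop : ENNReal.ofReal (Real.Gamma (1 + (n:ℝ) + t)) ≠ ⊤ := ENNReal.ofReal_ne_top
  have h2 : ENNReal.ofReal (Real.Gamma (1 + (n:ℝ) + t)) *
      ENNReal.ofReal ((∏ i, Real.Gamma (1 + α i)) / Real.Gamma (1 + (n:ℝ) + t)) =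
      ENNReal.ofReal (∏ i, Real.Gamma (1 + α i)) := by
    rw [← ENNReal.ofReal_mul hGpos.le, mul_div_cancel₀ _ (ne_of_gt hGpos)]
  exact (ENNReal.mul_right_inj hne0 hnetop).1 (by rw [main, h2])

lemma S_ae_A (n : ℕ) :
    {x : Fin n → ℝ | (∀ i, 0 ≤ x i) ∧ ∑ i, x i ≤ 1} =ᵐ[(volume : Measure (Fin n → ℝ))]
      {x : Fin n → ℝ | (∀ i, 0 < x i) ∧ ∑ i, x i < 1} := by
  have hproj : ∀ i : Fin n, volume {x : Fin n → ℝ | x i = 0} = 0 := by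
    intro i
    have hL : (LinearMap.proj i : (Fin n → ℝ) →ₗ[ℝ] ℝ) ≠ 0 := by
      intro h
      have := LinearMap.congr_fun h (Pi.single i (1:ℝ))
      simp [Pi.single_eq_same] at this
    exact null_level (LinearMap.proj i) hL 0
  have hsum : volume {x : Fin n → ℝ | ∑ i, x i = 1} = 0 := by
    rcases Nat.eq_zero_or_pos n with hn | hn
    · subst hn
      have : {x : Fin 0 → ℝ | ∑ i, x i = 1} = ∅ := by
        ext x; simp
      rw [this, measure_empty]
    · set L : (Fin n → ℝ) →ₗ[ℝ] ℝ := ∑ i, LinearMap.proj i with hLdef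
      have hLapp : ∀ x : Fin n → ℝ, L x = ∑ i, x i := by
        intro x
        simp [hLdef, LinearMap.sum_apply]
      have hL : L ≠ 0 := by
        intro h
        have := LinearMap.congr_fun h (fun _ => (1:ℝ))
        rw [hLapp] at this
        simp at this
        omega
      have hset : {x : Fin n → ℝ | ∑ i, x i = 1} = {x : Fin n → ℝ | L x = 1} := by
        ext x; simp [hLapp]
      rw [hset]
      exact null_level L hL 1
  rw [MeasureTheory.ae_eq_set]
  constructor
  · refine measure_mono_null (t := (⋃ i, {x : Fin n → ℝ | x i = 0}) ∪
      {x : Fin n → ℝ | ∑ i, x i = 1}) ?_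
      (measure_union_null (measure_iUnion_null hproj) hsum)
    rintro x ⟨⟨h1, h2⟩, hx⟩
    simp only [Set.mem_setOf_eq, not_and, not_lt] at hx
    by_cases hall : ∀ i, 0 < x i
    · right
      exact le_antisymm h2 (hx hall)
    · left
      push_neg at hall
      obtain ⟨i, hi⟩ := hall
      exact Set.mem_iUnion.2 ⟨i, le_antisymm hi (h1 i)⟩
  · have hsub : {x : Fin n → ℝ | (∀ i, 0 < x i) ∧ ∑ i, x i < 1} ⊆
        {x : Fin n → ℝ | (∀ i, 0 ≤ x i) ∧ ∑ i, x i ≤ 1} :=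
      fun x hx => ⟨fun i => (hx.1 i).le, hx.2.le⟩
    rw [Set.diff_eq_empty.2 hsub, measure_empty]

theorem integral_monomial_simplex (n : ℕ) (α : Fin n → ℝ) (hα : ∀ i, -1 < α i) :
    (∫ x in {x : Fin n → ℝ | (∀ i, 0 ≤ x i) ∧ ∑ i, x i ≤ 1}, ∏ i, x i ^ α i =
      (∏ i, Real.Gamma (1 + α i)) / Real.Gamma (1 + n + ∑ i, α i)) ∧
    ∀ β : Fin n → ℕ,
      ∫ x in {x : Fin n → ℝ | (∀ i, 0 ≤ x i) ∧ ∑ i, x i ≤ 1}, ∏ i, x i ^ β i =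
        (∏ i, (Nat.factorial (β i) : ℝ)) / (Nat.factorial (n + ∑ i, β i) : ℝ) := by
  have main : ∀ α : Fin n → ℝ, (∀ i, -1 < α i) →
      ∫ x in {x : Fin n → ℝ | (∀ i, 0 ≤ x i) ∧ ∑ i, x i ≤ 1}, ∏ i, x i ^ α i =
        (∏ i, Real.Gamma (1 + α i)) / Real.Gamma (1 + n + ∑ i, α i) := by
    intro α hα
    rw [show (volume : Measure (Fin n → ℝ)).restrict
        {x : Fin n → ℝ | (∀ i, 0 ≤ x i) ∧ ∑ i, x i ≤ 1} =
        volume.restrict {x : Fin n → ℝ | (∀ i, 0 < x i) ∧ ∑ i, x i < 1} from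
      Measure.restrict_congr_set (S_ae_A n)]
    rw [MeasureTheory.integral_eq_lintegral_of_nonneg_ae
      ((ae_restrict_iff' (meas_Aset 1)).2 (ae_of_all _ fun x hx =>
        Finset.prod_nonneg fun i _ => Real.rpow_nonneg (hx.1 i).le _))
      (meas_prod_rpow α).aestronglyMeasurable]
    rw [key α hα]
    refine ENNReal.toReal_ofReal ?_
    have h1 : 0 < ∏ i, Real.Gamma (1 + α i) :=
      Finset.prod_pos fun i _ => Real.Gamma_pos_of_pos (by linarith [hα i])
    have htn : -(n:ℝ) ≤ ∑ i, α i := by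
      have : ∑ _i : Fin n, (-1:ℝ) ≤ ∑ i, α i := Finset.sum_le_sum fun i _ => (hα i).le
      simpa using this
    have h2 : 0 < Real.Gamma (1 + n + ∑ i, α i) :=
      Real.Gamma_pos_of_pos (by push_cast; linarith)
    positivity
  refine ⟨main α hα, fun β => ?_⟩
  have hcast : ∀ i, -1 < (β i : ℝ) := fun i => by
    have : (0:ℝ) ≤ (β i : ℝ) := Nat.cast_nonneg _
    linarith
  have h := main (fun i => (β i : ℝ)) hcast
  have hLHS : (∫ x in {x : Fin n → ℝ | (∀ i, 0 ≤ x i) ∧ ∑ i, x i ≤ 1},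
      ∏ i, x i ^ (β i : ℝ)) =
      ∫ x in {x : Fin n → ℝ | (∀ i, 0 ≤ x i) ∧ ∑ i, x i ≤ 1}, ∏ i, x i ^ β i := by
    congr 1
    ext x
    exact Finset.prod_congr rfl fun i _ => Real.rpow_natCast _ _
  rw [hLHS] at h
  rw [h]
  congr 1
  · refine Finset.prod_congr rfl fun i _ => ?_
    show Real.Gamma (1 + (β i : ℝ)) = _
    rw [add_comm, show ((β i : ℝ) + 1) = ((β i + 1 : ℕ) : ℝ) by push_cast; ring]
    exact_mod_cast Real.Gamma_nat_eq_factorial (β i)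
  · show Real.Gamma (1 + (n:ℝ) + ∑ i, ((β i : ℝ))) = _
    rw [show (1 : ℝ) + n + ∑ i, (β i : ℝ) = ((n + ∑ i, β i : ℕ) : ℝ) + 1 by push_cast; ring]
    exact_mod_cast Real.Gamma_nat_eq_factorial (n + ∑ i, β i)
end
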